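/- Let p ∈ [1,∞) and γ ∈ [0, p−1), and set w_γ(x) = x^γ on (0,∞). Then every u ∈ W^{1,p}((0,∞), w_γ) has a continuous representative with sup_{x ≥ 0} |u(x)| ≤ C_{p,γ} ‖u‖_{W^{1,p}((0,∞), w_γ)} and u(x) → 0 as x → ∞. -/

import Mathlib

open MeasureTheory Set Filter
open scoped NNReal ENNReal Topology

lemma aux_two_rpow {a b pp : ℝ} (ha : 0 ≤ a) (hb : 0 ≤ b) (hpp : 0 ≤ pp) :
    (a + b) ^ pp ≤ 2 ^ pp * (a ^ pp + b ^ pp) := by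
  have h2 : (0:ℝ) ≤ 2 ^ pp := Real.rpow_nonneg (by norm_num) pp
  rcases le_total a b with h | h
  · calc (a + b) ^ pp ≤ (2 * b) ^ pp :=
        Real.rpow_le_rpow (by linarith) (by linarith) hpp
      _ = 2 ^ pp * b ^ pp := Real.mul_rpow (by norm_num) hb
      _ ≤ 2 ^ pp * (a ^ pp + b ^ pp) :=
        mul_le_mul_of_nonneg_left (le_add_of_nonneg_left (Real.rpow_nonneg ha pp)) h2
  · calc (a + b) ^ pp ≤ (2 * a) ^ pp :=
        Real.rpow_le_rpow (by linarith) (by linarith) hpp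
      _ = 2 ^ pp * a ^ pp := Real.mul_rpow (by norm_num) ha
      _ ≤ 2 ^ pp * (a ^ pp + b ^ pp) :=
        mul_le_mul_of_nonneg_left (le_add_of_nonneg_right (Real.rpow_nonneg hb pp)) h2

lemma aux_rpow_add_le {x y z : ℝ} (hx : 0 ≤ x) (hy : 0 ≤ y) (hz0 : 0 ≤ z) (hz1 : z ≤ 1) :
    (x + y) ^ z ≤ x ^ z + y ^ z := by
  have h := NNReal.rpow_add_le_add_rpow x.toNNReal y.toNNReal hz0 hz1
  rw [← Real.toNNReal_add hx hy] at h
  have h2 := NNReal.coe_le_coe.mpr h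
  simpa [NNReal.coe_rpow, Real.coe_toNNReal x hx, Real.coe_toNNReal y hy,
    Real.coe_toNNReal (x + y) (add_nonneg hx hy)] using h2

lemma aux_holder {p q γ : ℝ} (hp : 1 < p) (hq : q = p / (p - 1)) (hγ : 0 ≤ γ)
    {E : Set ℝ} (hE : MeasurableSet E) (hE0 : E ⊆ Ioi 0) {g : ℝ → ℝ}
    (hg0 : ∀ s, 0 ≤ g s) (hgm : AEStronglyMeasurable g (volume.restrict E))
    (h1 : IntegrableOn (fun s => g s ^ p * s ^ γ) E)
    (h2 : IntegrableOn (fun s : ℝ => s ^ (-(γ / (p - 1)))) E) :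
    IntegrableOn g E ∧
    ∫ s in E, g s ≤ (∫ s in E, g s ^ p * s ^ γ) ^ (1 / p) *
      (∫ s in E, s ^ (-(γ / (p - 1)))) ^ (1 / q) := by
  have hp0 : (0:ℝ) < p := lt_trans one_pos hp
  have hp1 : (0:ℝ) < p - 1 := by linarith
  have hpq : p.HolderConjugate q := hq ▸ Real.HolderConjugate.conjExponent hp
  have hq0 : (0:ℝ) < q := hpq.symm.pos
  set F : ℝ → ℝ := fun s => g s * s ^ (γ / p) with hF
  set H : ℝ → ℝ := fun s => s ^ (-(γ / p)) with hH
  have hae : ∀ᵐ s ∂(volume.restrict E), s ∈ E := ae_restrict_mem hE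
  have hFH : ∀ᵐ s ∂(volume.restrict E), F s * H s = g s := by
    filter_upwards [hae] with s hs
    have hs0 : (0:ℝ) < s := hE0 hs
    simp only [hF, hH]
    rw [mul_assoc, ← Real.rpow_add hs0]
    simp
  have hFp : ∀ᵐ s ∂(volume.restrict E), F s ^ p = g s ^ p * s ^ γ := by
    filter_upwards [hae] with s hs
    have hs0 : (0:ℝ) ≤ s := (hE0 hs).le
    simp only [hF]
    rw [Real.mul_rpow (hg0 s) (Real.rpow_nonneg hs0 _), ← Real.rpow_mul hs0,
      div_mul_cancel₀ γ (ne_of_gt hp0)]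
  have hHq : ∀ᵐ s ∂(volume.restrict E), H s ^ q = s ^ (-(γ / (p - 1))) := by
    filter_upwards [hae] with s hs
    have hs0 : (0:ℝ) ≤ s := (hE0 hs).le
    simp only [hH]
    rw [← Real.rpow_mul hs0]
    congr 1
    rw [hq]
    field_simp
  have hFnn : 0 ≤ᵐ[volume.restrict E] F := by
    filter_upwards [hae] with s hs
    exact mul_nonneg (hg0 s) (Real.rpow_nonneg (hE0 hs).le _)
  have hHnn : 0 ≤ᵐ[volume.restrict E] H := by
    filter_upwards [hae] with s hs
    exact Real.rpow_nonneg (hE0 hs).le _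
  have hFm : AEStronglyMeasurable F (volume.restrict E) :=
    hgm.mul ((measurable_id.pow_const (γ / p)).aestronglyMeasurable)
  have hHm : AEStronglyMeasurable H (volume.restrict E) :=
    (measurable_id.pow_const (-(γ / p))).aestronglyMeasurable
  -- Memℒp F
  have hFi : Integrable (fun s => ‖F s‖ ^ p) (volume.restrict E) := by
    refine h1.congr ?_
    filter_upwards [hFp, hFnn] with s h1s h2s
    rw [← h1s, Real.norm_eq_abs, abs_of_nonneg h2s]
  have hofp : (ENNReal.ofReal p) ≠ 0 := by
    simp [ENNReal.ofReal_eq_zero, not_le, hp0]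
  have hofq : (ENNReal.ofReal q) ≠ 0 := by
    simp [ENNReal.ofReal_eq_zero, not_le, hq0]
  have hFmem : MemLp F (ENNReal.ofReal p) (volume.restrict E) := by
    rw [← memLp_norm_rpow_iff hFm hofp ENNReal.ofReal_ne_top]
    rw [ENNReal.toReal_ofReal hp0.le, ENNReal.div_self hofp ENNReal.ofReal_ne_top,
      memLp_one_iff_integrable]
    exact hFi
  have hHi : Integrable (fun s => ‖H s‖ ^ q) (volume.restrict E) := by
    refine h2.congr ?_
    filter_upwards [hHq, hHnn] with s h1s h2s
    rw [← h1s, Real.norm_eq_abs, abs_of_nonneg h2s]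
  have hHmem : MemLp H (ENNReal.ofReal q) (volume.restrict E) := by
    rw [← memLp_norm_rpow_iff hHm hofq ENNReal.ofReal_ne_top]
    rw [ENNReal.toReal_ofReal hq0.le, ENNReal.div_self hofq ENNReal.ofReal_ne_top,
      memLp_one_iff_integrable]
    exact hHi
  constructor
  · -- integrability via Young
    have hDi : Integrable (fun s => g s ^ p * s ^ γ + s ^ (-(γ / (p - 1)))) (volume.restrict E) :=
      h1.add h2
    refine Integrable.mono hDi hgm ?_
    filter_upwards [hae, hFH] with s hs hfh
    have hy : F s * H s ≤ F s ^ p / p + H s ^ q / q :=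
      Real.young_inequality_of_nonneg
        (mul_nonneg (hg0 s) (Real.rpow_nonneg (hE0 hs).le _))
        (Real.rpow_nonneg (hE0 hs).le (-(γ / p))) hpq
    have hFps : F s ^ p = g s ^ p * s ^ γ := by
      simp only [hF]
      rw [Real.mul_rpow (hg0 s) (Real.rpow_nonneg (hE0 hs).le _), ← Real.rpow_mul (hE0 hs).le,
        div_mul_cancel₀ γ (ne_of_gt hp0)]
    have hHqs : H s ^ q = s ^ (-(γ / (p - 1))) := by
      simp only [hH]
      rw [← Real.rpow_mul (hE0 hs).le]
      congr 1
      rw [hq]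
      field_simp
    have h5 : g s ≤ g s ^ p * s ^ γ + s ^ (-(γ / (p - 1))) := by
      calc g s = F s * H s := hfh.symm
        _ ≤ F s ^ p / p + H s ^ q / q := hy
        _ ≤ F s ^ p + H s ^ q := by
            gcongr
            · exact div_le_self (by
                rw [hFps]
                exact mul_nonneg (Real.rpow_nonneg (hg0 s) p)
                  (Real.rpow_nonneg (hE0 hs).le γ)) hp.le
            · exact div_le_self (by
                rw [hHqs]
                exact Real.rpow_nonneg (hE0 hs).le _) hpq.symm.lt.le
        _ = _ := by rw [hFps, hHqs]
    rw [Real.norm_eq_abs, abs_of_nonneg (hg0 s), Real.norm_eq_abs]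
    exact h5.trans (le_abs_self _)
  · have hhold := integral_mul_le_Lp_mul_Lq_of_nonneg hpq hFnn hHnn hFmem hHmem
    rw [integral_congr_ae hFH, integral_congr_ae hFp, integral_congr_ae hHq] at hhold
    exact hhold

theorem stmt_15 (p γ : ℝ) (hp : 1 ≤ p) (h0 : 0 ≤ γ) (h1 : γ < p - 1) :
    ∃ C : ℝ, 0 < C ∧ ∀ u u' : ℝ → ℝ,
      (∀ x ∈ Ioi (0:ℝ), HasDerivAt u (u' x) x) →
      IntegrableOn (fun x => |u x| ^ p * x ^ γ) (Ioi 0) →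
      IntegrableOn (fun x => |u' x| ^ p * x ^ γ) (Ioi 0) →
      ∃ v : ℝ → ℝ, ContinuousOn v (Ici 0) ∧ (∀ x ∈ Ioi (0:ℝ), v x = u x) ∧
        Filter.Tendsto v Filter.atTop (nhds 0) ∧
        ∀ x ∈ Ici (0:ℝ), |v x| ≤ C *
          ((∫ x in Ioi (0:ℝ), |u x| ^ p * x ^ γ) ^ (1 / p) +
           (∫ x in Ioi (0:ℝ), |u' x| ^ p * x ^ γ) ^ (1 / p)) := by
  have hp1 : 1 < p := by linarith
  have hp0 : (0:ℝ) < p := by linarith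
  have hpm : (0:ℝ) < p - 1 := by linarith
  set q : ℝ := p / (p - 1) with hq
  have hq0 : (0:ℝ) < q := by positivity
  have hr0 : (0:ℝ) ≤ γ / (p - 1) := div_nonneg h0 hpm.le
  have hr1 : γ / (p - 1) < 1 := (div_lt_one hpm).mpr (by linarith)
  -- weight integrability
  have hwint : ∀ b : ℝ, IntegrableOn (fun s : ℝ => s ^ (-(γ / (p - 1)))) (Ioc 0 b) := by
    intro b
    rcases le_or_gt b 0 with hb | hb
    · rw [Ioc_eq_empty (not_lt.mpr hb)]
      exact integrableOn_empty
    · exact (intervalIntegrable_iff_integrableOn_Ioc_of_le hb.le).mp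
        (intervalIntegral.intervalIntegrable_rpow' (by linarith))
  set K : ℝ := ∫ s in Ioc (0:ℝ) 2, s ^ (-(γ / (p - 1))) with hK
  have hKpos : 0 < K := by
    rw [hK, ← intervalIntegral.integral_of_le (by norm_num : (0:ℝ) ≤ 2),
      integral_rpow (Or.inl (by linarith)),
      Real.zero_rpow (by linarith : -(γ / (p - 1)) + 1 ≠ 0), sub_zero]
    have h2 : (0:ℝ) < (2:ℝ) ^ (-(γ / (p - 1)) + 1) := Real.rpow_pos_of_pos (by norm_num) _
    exact div_pos h2 (by linarith)
  have hK1 : (1:ℝ) ≤ K := by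
    have e1 : ∫ _s in Ioc (0:ℝ) 1, (1:ℝ) = 1 := by simp [Real.volume_Ioc]
    calc (1:ℝ) = ∫ _s in Ioc (0:ℝ) 1, (1:ℝ) := e1.symm
      _ ≤ ∫ s in Ioc (0:ℝ) 1, s ^ (-(γ / (p - 1))) := by
          refine setIntegral_mono_on
            (integrableOn_const measure_Ioc_lt_top.ne) (hwint 1)
            measurableSet_Ioc ?_
          intro s hs
          exact Real.one_le_rpow_of_pos_of_le_one_of_nonpos hs.1 hs.2 (by linarith)
      _ ≤ K := by
          refine setIntegral_mono_set (hwint 2) ?_ ?_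
          · filter_upwards [ae_restrict_mem measurableSet_Ioc] with s hs
            exact Real.rpow_nonneg hs.1.le _
          · exact (Ioc_subset_Ioc le_rfl (by norm_num)).eventuallyLE
  have hCpos : 0 < 2 * K ^ (1/q) := by
    have := Real.rpow_pos_of_pos hKpos (1/q)
    linarith
  refine ⟨2 * K ^ (1/q), hCpos, ?_⟩
  intro u u' hderiv hu hu'
  set X : ℝ := ∫ x in Ioi (0:ℝ), |u x| ^ p * x ^ γ with hX
  set Y : ℝ := ∫ x in Ioi (0:ℝ), |u' x| ^ p * x ^ γ with hY
  have huc : ContinuousOn u (Ioi 0) :=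
    fun y hy => (hderiv y hy).continuousAt.continuousWithinAt
  have hu'm : AEStronglyMeasurable u' (volume.restrict (Ioi 0)) := by
    have hd : ∀ᵐ y ∂volume.restrict (Ioi (0:ℝ)), deriv u y = u' y :=
      (ae_restrict_mem measurableSet_Ioi).mono (fun y hy => (hderiv y hy).deriv)
    exact ((measurable_deriv u).aestronglyMeasurable).congr hd
  have hum : AEStronglyMeasurable u (volume.restrict (Ioi 0)) :=
    huc.aestronglyMeasurable measurableSet_Ioi
  set g : ℝ → ℝ := fun s => |u s| + |u' s| with hgdef
  have hg0 : ∀ s, 0 ≤ g s := fun s => add_nonneg (abs_nonneg _) (abs_nonneg _)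
  have hgm : AEStronglyMeasurable g (volume.restrict (Ioi 0)) := by
    have := hum.norm.add hu'm.norm
    exact this.congr (Eventually.of_forall fun s => by simp [hgdef, Real.norm_eq_abs])
  set G : ℝ → ℝ := fun s => g s ^ p * s ^ γ with hGdef
  have hGm : AEStronglyMeasurable G (volume.restrict (Ioi 0)) :=
    ((hgm.aemeasurable.pow_const p).mul
      ((measurable_id.pow_const γ).aemeasurable)).aestronglyMeasurable
  have hDint : IntegrableOn
      (fun s => 2^p * (|u s| ^ p * s ^ γ) + 2^p * (|u' s| ^ p * s ^ γ)) (Ioi 0) :=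
    (hu.const_mul _).add (hu'.const_mul _)
  have hGleD : ∀ s ∈ Ioi (0:ℝ),
      G s ≤ 2^p * (|u s| ^ p * s ^ γ) + 2^p * (|u' s| ^ p * s ^ γ) := by
    intro s hs
    have h2 := aux_two_rpow (abs_nonneg (u s)) (abs_nonneg (u' s)) hp0.le
    have hs' : (0:ℝ) ≤ s ^ γ := Real.rpow_nonneg (le_of_lt hs) γ
    calc G s = (|u s| + |u' s|) ^ p * s ^ γ := rfl
      _ ≤ (2^p * (|u s| ^ p + |u' s| ^ p)) * s ^ γ := mul_le_mul_of_nonneg_right h2 hs'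
      _ = _ := by ring
  have hG0 : ∀ s ∈ Ioi (0:ℝ), 0 ≤ G s := fun s hs =>
    mul_nonneg (Real.rpow_nonneg (hg0 s) p) (Real.rpow_nonneg (le_of_lt hs) γ)
  have hGint : IntegrableOn G (Ioi 0) := by
    refine Integrable.mono hDint hGm ?_
    filter_upwards [ae_restrict_mem measurableSet_Ioi] with s hs
    rw [Real.norm_eq_abs, abs_of_nonneg (hG0 s hs), Real.norm_eq_abs]
    exact (hGleD s hs).trans (le_abs_self _)
  have hX0 : 0 ≤ X := setIntegral_nonneg measurableSet_Ioi (fun s hs =>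
    mul_nonneg (Real.rpow_nonneg (abs_nonneg _) p) (Real.rpow_nonneg (le_of_lt hs) γ))
  have hY0 : 0 ≤ Y := setIntegral_nonneg measurableSet_Ioi (fun s hs =>
    mul_nonneg (Real.rpow_nonneg (abs_nonneg _) p) (Real.rpow_nonneg (le_of_lt hs) γ))
  have hGtot : ∫ s in Ioi (0:ℝ), G s ≤ 2^p * (X + Y) := by
    have h := integral_mono_ae hGint hDint
      ((ae_restrict_mem measurableSet_Ioi).mono hGleD)
    rwa [integral_add (hu.const_mul _) (hu'.const_mul _), integral_const_mul,
      integral_const_mul, ← mul_add, ← hX, ← hY] at h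
  -- master bound
  have master : ∀ x : ℝ, 0 < x →
      |u x| ≤ (∫ s in Ioi x, G s) ^ (1/p) * K ^ (1/q) := by
    intro x hx
    have hle : x ≤ x + 1 := by linarith
    have hEsub : Ioc x (x+1) ⊆ Ioi (0:ℝ) := fun s hs => lt_trans hx hs.1
    have hgmE : AEStronglyMeasurable g (volume.restrict (Ioc x (x+1))) :=
      hgm.mono_measure (Measure.restrict_mono hEsub le_rfl)
    have hu'mE : AEStronglyMeasurable u' (volume.restrict (Ioc x (x+1))) :=
      hu'm.mono_measure (Measure.restrict_mono hEsub le_rfl)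
    have hGE : IntegrableOn (fun s => g s ^ p * s ^ γ) (Ioc x (x+1)) :=
      hGint.mono_set hEsub
    have hwE : IntegrableOn (fun s : ℝ => s ^ (-(γ / (p - 1)))) (Ioc x (x+1)) :=
      (hwint (x+1)).mono_set (Ioc_subset_Ioc hx.le le_rfl)
    obtain ⟨hgEint, hgEbd⟩ :=
      aux_holder hp1 hq h0 measurableSet_Ioc hEsub hg0 hgmE hGE hwE
    have hu'E : IntegrableOn u' (Ioc x (x+1)) := by
      refine Integrable.mono hgEint hu'mE (Eventually.of_forall fun s => ?_)
      rw [Real.norm_eq_abs, Real.norm_eq_abs, abs_of_nonneg (hg0 s)]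
      exact le_add_of_nonneg_left (abs_nonneg _)
    have huE : IntegrableOn u (Ioc x (x+1)) := by
      have hIcc : Icc x (x+1) ⊆ Ioi (0:ℝ) := fun s hs => lt_of_lt_of_le hx hs.1
      exact ((huc.mono hIcc).integrableOn_Icc).mono_set Ioc_subset_Icc_self
    have hw'E : IntervalIntegrable (fun s => u' s * (1 + x - s)) volume x (x+1) := by
      rw [intervalIntegrable_iff_integrableOn_Ioc_of_le hle]
      refine Integrable.mono hu'E
        (hu'mE.mul (Continuous.aestronglyMeasurable (by continuity))) ?_
      filter_upwards [ae_restrict_mem measurableSet_Ioc] with s hs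
      rw [norm_mul]
      have h1' : ‖1 + x - s‖ ≤ 1 := by
        rw [Real.norm_eq_abs, abs_le]
        constructor
        · linarith [hs.2]
        · linarith [hs.1]
      calc ‖u' s‖ * ‖1 + x - s‖ ≤ ‖u' s‖ * 1 :=
            mul_le_mul_of_nonneg_left h1' (norm_nonneg _)
        _ = ‖u' s‖ := mul_one _
    have huEneg : IntervalIntegrable (fun s => u s * (-1)) volume x (x+1) :=
      (intervalIntegrable_iff_integrableOn_Ioc_of_le hle).mpr (huE.mul_const _)
    have hftc : ∫ t in x..(x+1), (u' t * (1 + x - t) + u t * (-1)) =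
        u (x+1) * (1 + x - (x+1)) - u x * (1 + x - x) := by
      refine intervalIntegral.integral_eq_sub_of_hasDerivAt
        (f := fun t => u t * (1 + x - t)) ?_ (hw'E.add huEneg)
      intro t ht
      rw [uIcc_of_le hle] at ht
      have ht0 : (0:ℝ) < t := lt_of_lt_of_le hx ht.1
      exact (hderiv t ht0).mul ((hasDerivAt_id t).const_sub (1+x))
    have key : u x = ∫ t in x..(x+1), (u t - u' t * (1 + x - t)) := by
      have hfun : (fun t => u t - u' t * (1 + x - t)) =
          (fun t => -(u' t * (1 + x - t) + u t * (-1))) := by funext t; ring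
      rw [hfun, intervalIntegral.integral_neg, hftc]
      have e1 : 1 + x - (x+1) = 0 := by ring
      have e2 : 1 + x - x = 1 := by ring
      rw [e1, e2]
      ring
    have habs : |u x| ≤ ∫ s in Ioc x (x+1), g s := by
      rw [key, ← Real.norm_eq_abs]
      refine (intervalIntegral.norm_integral_le_integral_norm hle).trans ?_
      rw [intervalIntegral.integral_of_le hle]
      refine setIntegral_mono_on
        ((huE.sub ((intervalIntegrable_iff_integrableOn_Ioc_of_le hle).mp hw'E)).norm)
        hgEint measurableSet_Ioc ?_
      intro s hs
      have h1' : |1 + x - s| ≤ 1 := by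
        rw [abs_le]
        constructor
        · linarith [hs.2]
        · linarith [hs.1]
      calc ‖u s - u' s * (1 + x - s)‖ ≤ ‖u s‖ + ‖u' s * (1 + x - s)‖ := norm_sub_le _ _
        _ = |u s| + |u' s| * |1 + x - s| := by
            rw [norm_mul, Real.norm_eq_abs, Real.norm_eq_abs, Real.norm_eq_abs]
        _ ≤ |u s| + |u' s| * 1 := by gcongr
        _ = g s := by rw [mul_one]
    have hwEK : ∫ s in Ioc x (x+1), s ^ (-(γ / (p - 1))) ≤ K := by
      rcases le_or_gt x 1 with hx1 | hx1
      · refine setIntegral_mono_set (hwint 2) ?_ ?_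
        · filter_upwards [ae_restrict_mem measurableSet_Ioc] with s hs
          exact Real.rpow_nonneg hs.1.le _
        · exact (Ioc_subset_Ioc hx.le (by linarith)).eventuallyLE
      · have e1 : ∫ _s in Ioc x (x+1), (1:ℝ) = 1 := by simp [Real.volume_Ioc]
        calc ∫ s in Ioc x (x+1), s ^ (-(γ / (p - 1)))
            ≤ ∫ _s in Ioc x (x+1), (1:ℝ) := by
              refine setIntegral_mono_on hwE
                (integrableOn_const measure_Ioc_lt_top.ne)
                measurableSet_Ioc ?_
              intro s hs
              exact Real.rpow_le_one_of_one_le_of_nonpos (by linarith [hs.1]) (by linarith)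
          _ = 1 := e1
          _ ≤ K := hK1
    have hGmono : ∫ s in Ioc x (x+1), g s ^ p * s ^ γ ≤ ∫ s in Ioi x, G s := by
      refine setIntegral_mono_set (hGint.mono_set (Ioi_subset_Ioi hx.le)) ?_ ?_
      · filter_upwards [ae_restrict_mem measurableSet_Ioi] with s hs
        exact hG0 s (lt_trans hx hs)
      · exact (Ioc_subset_Ioi_self).eventuallyLE
    refine habs.trans (hgEbd.trans ?_)
    have hn1 : 0 ≤ ∫ s in Ioc x (x+1), g s ^ p * s ^ γ :=
      setIntegral_nonneg measurableSet_Ioc fun s hs =>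
        mul_nonneg (Real.rpow_nonneg (hg0 s) p) (Real.rpow_nonneg (lt_trans hx hs.1).le γ)
    have hn2 : 0 ≤ ∫ s in Ioc x (x+1), s ^ (-(γ / (p - 1))) :=
      setIntegral_nonneg measurableSet_Ioc fun s hs =>
        Real.rpow_nonneg (lt_trans hx hs.1).le _
    have hi1 : (∫ s in Ioc x (x+1), g s ^ p * s ^ γ) ^ (1/p) ≤
        (∫ s in Ioi x, G s) ^ (1/p) :=
      Real.rpow_le_rpow hn1 hGmono (by positivity)
    have hi2 : (∫ s in Ioc x (x+1), s ^ (-(γ / (p - 1)))) ^ (1/q) ≤ K ^ (1/q) :=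
      Real.rpow_le_rpow hn2 hwEK (by positivity)
    exact mul_le_mul hi1 hi2 (Real.rpow_nonneg hn2 _)
      (Real.rpow_nonneg (le_trans hn1 hGmono) _)
  -- global bound
  have bound2 : ∀ x : ℝ, 0 < x →
      |u x| ≤ 2 * K ^ (1/q) * (X ^ (1/p) + Y ^ (1/p)) := by
    intro x hx
    refine (master x hx).trans ?_
    have hIoiG : ∫ s in Ioi x, G s ≤ ∫ s in Ioi (0:ℝ), G s := by
      refine setIntegral_mono_set hGint ?_ (Ioi_subset_Ioi hx.le).eventuallyLE
      filter_upwards [ae_restrict_mem measurableSet_Ioi] with s hs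
      exact hG0 s hs
    have hIoiG0 : 0 ≤ ∫ s in Ioi x, G s :=
      setIntegral_nonneg measurableSet_Ioi fun s hs => hG0 s (lt_trans hx hs)
    have c1 : (∫ s in Ioi x, G s) ^ (1/p) ≤ (2^p * (X + Y)) ^ (1/p) :=
      Real.rpow_le_rpow hIoiG0 (hIoiG.trans hGtot) (by positivity)
    have c2 : ((2:ℝ)^p * (X + Y)) ^ (1/p) = 2 * (X + Y) ^ (1/p) := by
      rw [Real.mul_rpow (by positivity) (by positivity)]
      congr 1
      rw [← Real.rpow_mul (by norm_num : (0:ℝ) ≤ 2), mul_one_div, div_self hp0.ne',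
        Real.rpow_one]
    have c3 : (X + Y) ^ (1/p) ≤ X ^ (1/p) + Y ^ (1/p) :=
      aux_rpow_add_le hX0 hY0 (by positivity) (by rw [div_le_one hp0]; linarith)
    have c4 : (∫ s in Ioi x, G s) ^ (1/p) ≤ 2 * (X ^ (1/p) + Y ^ (1/p)) := by
      refine c1.trans ?_
      rw [c2]
      linarith
    calc (∫ s in Ioi x, G s) ^ (1/p) * K ^ (1/q)
        ≤ (2 * (X ^ (1/p) + Y ^ (1/p))) * K ^ (1/q) :=
        mul_le_mul_of_nonneg_right c4 (Real.rpow_nonneg hKpos.le _)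
      _ = 2 * K ^ (1/q) * (X ^ (1/p) + Y ^ (1/p)) := by ring
  -- integrability of u' near 0
  have hu'I : ∀ b : ℝ, IntegrableOn u' (Ioc 0 b) := by
    intro b
    have hsub : Ioc (0:ℝ) b ⊆ Ioi 0 := Ioc_subset_Ioi_self
    have hmeas : AEStronglyMeasurable u' (volume.restrict (Ioc (0:ℝ) b)) :=
      hu'm.mono_measure (Measure.restrict_mono hsub le_rfl)
    have habs : AEStronglyMeasurable (fun s => |u' s|) (volume.restrict (Ioc (0:ℝ) b)) := by
      simpa [Real.norm_eq_abs] using hmeas.norm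
    obtain ⟨hint, -⟩ := aux_holder hp1 hq h0 measurableSet_Ioc hsub
      (fun s => abs_nonneg (u' s)) habs (hu'.mono_set hsub) (hwint b)
    refine Integrable.mono hint hmeas (Eventually.of_forall fun s => ?_)
    simp [Real.norm_eq_abs, abs_abs]
  have hu'II : ∀ a b : ℝ, 0 ≤ a → 0 ≤ b → IntervalIntegrable u' volume a b := by
    intro a b ha hb
    rw [intervalIntegrable_iff]
    exact (hu'I (max a b)).mono_set (Ioc_subset_Ioc (le_min ha hb) le_rfl)
  set P : ℝ → ℝ := fun y => ∫ t in (0:ℝ)..y, u' t with hP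
  set v : ℝ → ℝ := fun y => (u 1 - P 1) + P y with hv
  have hveq : ∀ y ∈ Ioi (0:ℝ), v y = u y := by
    intro y hy
    have hadj := intervalIntegral.integral_add_adjacent_intervals
      (hu'II 0 y le_rfl hy.le) (hu'II y 1 hy.le zero_le_one)
    have hftc2 : ∫ t in y..1, u' t = u 1 - u y := by
      refine intervalIntegral.integral_eq_sub_of_hasDerivAt ?_ (hu'II y 1 hy.le zero_le_one)
      intro t ht
      have ht0 : (0:ℝ) < t := by
        rcases le_total y 1 with h | h
        · rw [uIcc_of_le h] at ht; exact lt_of_lt_of_le hy ht.1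
        · rw [uIcc_of_ge h] at ht; exact lt_of_lt_of_le one_pos ht.1
      exact hderiv t ht0
    have : P y + (u 1 - u y) = P 1 := by rw [← hftc2]; exact hadj
    simp only [hv]
    linarith
  have hvcont : ContinuousOn v (Ici 0) := by
    refine continuousOn_const.add ?_
    intro y hy
    have hyle : y ≤ y + 1 := by linarith
    have hIcc : ContinuousOn (fun z => ∫ t in Ioc (0:ℝ) z, u' t) (Icc 0 (y+1)) :=
      intervalIntegral.continuousOn_primitive
        ((integrableOn_Icc_iff_integrableOn_Ioc).mpr (hu'I (y+1)))
    have hEq : EqOn P (fun z => ∫ t in Ioc (0:ℝ) z, u' t) (Icc 0 (y+1)) := by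
      intro z hz
      simp only [hP]
      exact intervalIntegral.integral_of_le hz.1
    have hC : ContinuousWithinAt P (Icc 0 (y+1)) y :=
      (hIcc.congr hEq) y ⟨hy, hyle⟩
    refine hC.mono_of_mem_nhdsWithin ?_
    rw [show Icc (0:ℝ) (y+1) = Ici 0 ∩ Iic (y+1) from (Ici_inter_Iic).symm]
    exact Filter.inter_mem self_mem_nhdsWithin
      (mem_nhdsWithin_of_mem_nhds (Iic_mem_nhds (by linarith)))
  have htail : Tendsto (fun x => ∫ s in Ioi x, G s) atTop (𝓝 0) := by
    have h1' : Tendsto (fun x => ∫ s in (0:ℝ)..x, G s) atTop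
        (𝓝 (∫ s in Ioi (0:ℝ), G s)) :=
      intervalIntegral_tendsto_integral_Ioi 0 hGint tendsto_id
    have h2' : ∀ᶠ x in atTop,
        (∫ s in Ioi (0:ℝ), G s) - ∫ s in (0:ℝ)..x, G s = ∫ s in Ioi x, G s := by
      filter_upwards [eventually_ge_atTop (0:ℝ)] with x hx
      rw [intervalIntegral.integral_of_le hx]
      have hu2 := setIntegral_union (Ioc_disjoint_Ioi le_rfl) measurableSet_Ioi
        (hGint.mono_set Ioc_subset_Ioi_self) (hGint.mono_set (Ioi_subset_Ioi hx))
      rw [Ioc_union_Ioi_eq_Ioi hx] at hu2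
      linarith
    have h3' : Tendsto (fun x : ℝ => (∫ s in Ioi (0:ℝ), G s) - ∫ s in (0:ℝ)..x, G s)
        atTop (𝓝 ((∫ s in Ioi (0:ℝ), G s) - ∫ s in Ioi (0:ℝ), G s)) :=
      tendsto_const_nhds.sub h1'
    rw [sub_self] at h3'
    exact h3'.congr' h2'
  have hub : Tendsto (fun x : ℝ => (∫ s in Ioi x, G s) ^ (1/p) * K ^ (1/q))
      atTop (𝓝 0) := by
    have h3 := htail.rpow_const (Or.inr (by positivity : (0:ℝ) ≤ 1/p))
    rw [Real.zero_rpow (by positivity : (1:ℝ)/p ≠ 0)] at h3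
    simpa using h3.mul_const (K ^ (1/q))
  have htend : Tendsto v atTop (𝓝 0) := by
    rw [tendsto_zero_iff_norm_tendsto_zero]
    refine tendsto_of_tendsto_of_tendsto_of_le_of_le' tendsto_const_nhds hub ?_ ?_
    · exact Eventually.of_forall fun x => norm_nonneg _
    · filter_upwards [eventually_gt_atTop (0:ℝ)] with x hx
      rw [Real.norm_eq_abs, hveq x hx]
      exact master x hx
  refine ⟨v, hvcont, hveq, htend, ?_⟩
  intro x hx
  rcases (mem_Ici.mp hx).eq_or_lt with h | h
  · rw [← h]
    have hvc : ContinuousWithinAt v (Ioi 0) 0 :=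
      (hvcont 0 self_mem_Ici).mono Ioi_subset_Ici_self
    have htd : Tendsto (fun z => |v z|) (𝓝[>] (0:ℝ)) (𝓝 |v 0|) :=
      (continuous_abs.tendsto (v 0)).comp hvc.tendsto
    refine le_of_tendsto htd ?_
    filter_upwards [self_mem_nhdsWithin] with z hz
    rw [hveq z hz]
    exact bound2 z hz
  · rw [hveq x h]
    exact bound2 x h
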